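/- Let R be the ring of integers of a non-archimedean local field of residue characteristic ≠ 2 or unramified dyadic. If M is a primitively n-universal nondegenerate R-lattice, then the Witt index of the quadratic space FM is at least n; in particular the rank of M is at least 2n. -/

import Mathlib

open Matrix

open IsLocalRing

/-- In a DVR with finite residue field, all quotients `R ⧸ 𝔪^j` are finite. -/
lemma finite_quot_pow_maximalIdeal (R : Type*) [CommRing R] [IsDomain R]
    [IsDiscreteValuationRing R] [Finite (IsLocalRing.ResidueField R)] (j : ℕ) :
    Finite (R ⧸ (maximalIdeal R) ^ j) := by
  induction j with
  | zero =>
    rw [pow_zero, Ideal.one_eq_top]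
    have : Subsingleton (R ⧸ (⊤ : Ideal R)) := Ideal.Quotient.subsingleton_iff.mpr rfl
    infer_instance
  | succ j ih =>
    obtain ⟨π, hπ⟩ := IsDiscreteValuationRing.exists_irreducible R
    have hle : (maximalIdeal R) ^ (j + 1) ≤ (maximalIdeal R) ^ j :=
      Ideal.pow_le_pow_right (Nat.le_succ j)
    set I := (maximalIdeal R) ^ (j + 1) with hI
    set K : Ideal (R ⧸ I) := ((maximalIdeal R) ^ j).map (Ideal.Quotient.mk I) with hK
    have hquot : Finite ((R ⧸ I) ⧸ K) := by
      exact Finite.of_equiv _ (DoubleQuot.quotQuotEquivQuotOfLE hle).symm.toEquiv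
    have hfinK : Finite K := by
      have hmax : maximalIdeal R = Ideal.span {π} := hπ.maximalIdeal_eq
      have hsurj : Function.Surjective
          (fun x : ResidueField R => (⟨Ideal.Quotient.mk I (π ^ j * x.out),
            Ideal.mem_map_of_mem _
              (Ideal.mul_mem_right _ _ (Ideal.pow_mem_pow
                ((IsLocalRing.mem_maximalIdeal π).mpr hπ.not_isUnit) j))⟩ : K)) := by
        rintro ⟨y, hy⟩
        obtain ⟨z, hz, rfl⟩ := Ideal.mem_map_iff_of_surjective _
          Ideal.Quotient.mk_surjective |>.mp hy
        rw [hmax, Ideal.span_singleton_pow, Ideal.mem_span_singleton] at hz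
        obtain ⟨t, rfl⟩ := hz
        refine ⟨Ideal.Quotient.mk _ t, ?_⟩
        apply Subtype.ext
        simp only
        rw [Ideal.Quotient.eq]
        have hmem : (Ideal.Quotient.mk (maximalIdeal R) t).out - t ∈ maximalIdeal R := by
          rw [← Ideal.Quotient.eq]
          exact Quotient.out_eq _
        have : π ^ j * (Ideal.Quotient.mk (maximalIdeal R) t).out - π ^ j * t
            = π ^ j * ((Ideal.Quotient.mk (maximalIdeal R) t).out - t) := by ring
        rw [this, hI, pow_succ]
        exact Ideal.mul_mem_mul
          (Ideal.pow_mem_pow ((IsLocalRing.mem_maximalIdeal π).mpr hπ.not_isUnit) j) hmem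
      exact Finite.of_surjective _ hsurj
    exact Finite.of_ideal_quotient K

/-- If all entries of `B` lie in an ideal `I`, so do all entries of `A * B`. -/
lemma mul_entries_mem_right {R : Type*} [CommRing R] {p q r : ℕ} (I : Ideal R)
    (A : Matrix (Fin p) (Fin q) R) {B : Matrix (Fin q) (Fin r) R}
    (hB : ∀ c b, B c b ∈ I) (a : Fin p) (b : Fin r) : (A * B) a b ∈ I := by
  rw [Matrix.mul_apply]
  exact Ideal.sum_mem _ fun c _ => Ideal.mul_mem_left _ _ (hB c b)

/-- If all entries of `A` lie in an ideal `I`, so do all entries of `A * B`. -/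
lemma mul_entries_mem_left {R : Type*} [CommRing R] {p q r : ℕ} (I : Ideal R)
    {A : Matrix (Fin p) (Fin q) R} (B : Matrix (Fin q) (Fin r) R)
    (hA : ∀ a c, A a c ∈ I) (a : Fin p) (b : Fin r) : (A * B) a b ∈ I := by
  rw [Matrix.mul_apply]
  exact Ideal.sum_mem _ fun c _ => Ideal.mul_mem_right _ _ (hA a c)

/-- Primitive representation: `T` with `Tᵀ H T = G` whose image is a direct summand
(equivalently `T` has a left inverse). -/
def PrimRep {R : Type*} [CommRing R] {ι κ : Type*} [Fintype ι] [Fintype κ] [DecidableEq κ]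
    (G : Matrix κ κ R) (H : Matrix ι ι R) : Prop :=
  ∃ T : Matrix ι κ R, Tᵀ * H * T = G ∧ ∃ P : Matrix κ ι R, P * T = 1

/-- Let `R` be the ring of integers of a non-archimedean local field in which `2` is a unit or a
prime.  If `M` (with Gram matrix `G`) is a primitively `n`-universal nondegenerate `R`-lattice,
then the quadratic space `FM` over the fraction field contains an `n`-dimensional totally
isotropic subspace (Witt index `≥ n`); in particular `rank M ≥ 2n`. -/
theorem witt_index_of_primitively_universal
    (R : Type*) [CommRing R] [IsDomain R] [IsDiscreteValuationRing R]
    [IsAdicComplete (IsLocalRing.maximalIdeal R) R]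
    [Finite (IsLocalRing.ResidueField R)]
    (h2 : IsUnit (2 : R) ∨ Prime (2 : R))
    {m n : ℕ} (hn : 1 ≤ n) (G : Matrix (Fin m) (Fin m) R)
    (hG : G.IsSymm) (hdet : G.det ≠ 0)
    (huniv : ∀ N : Matrix (Fin n) (Fin n) R, N.IsSymm → N.det ≠ 0 → PrimRep N G) :
    (∃ T : Matrix (Fin m) (Fin n) (FractionRing R),
        (∃ P : Matrix (Fin n) (Fin m) (FractionRing R), P * T = 1) ∧
          Tᵀ * G.map (algebraMap R (FractionRing R)) * T = 0) ∧
      2 * n ≤ m := by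
  classical
  set 𝔪 := maximalIdeal R with h𝔪
  obtain ⟨π, hπ⟩ := IsDiscreteValuationRing.exists_irreducible R
  have hπ𝔪 : π ∈ 𝔪 := (IsLocalRing.mem_maximalIdeal π).mpr hπ.not_isUnit
  -- Step 1: the integral representations of `π^k • 1`.
  have hrep : ∀ k : ℕ, ∃ Tk : Matrix (Fin m) (Fin n) R,
      Tkᵀ * G * Tk = π ^ k • (1 : Matrix (Fin n) (Fin n) R) ∧
        ∃ Pk : Matrix (Fin n) (Fin m) R, Pk * Tk = 1 := by
    intro k
    refine huniv (π ^ k • (1 : Matrix (Fin n) (Fin n) R)) ?_ ?_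
    · rw [Matrix.IsSymm, Matrix.transpose_smul, Matrix.transpose_one]
    · rw [Matrix.det_smul, Matrix.det_one, mul_one]
      exact pow_ne_zero _ (pow_ne_zero _ hπ.ne_zero)
  choose T hT P hP using hrep
  -- Step 2: an ultrafilter refining `atTop`.
  set U : Ultrafilter ℕ := Ultrafilter.of Filter.atTop with hUdef
  have hU : (U : Filter ℕ) ≤ Filter.atTop := Ultrafilter.of_le _
  -- Step 3: the limit residues.
  have hfin : ∀ j : ℕ, Finite (Matrix (Fin m) (Fin n) (R ⧸ 𝔪 ^ j)) := by
    intro j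
    have := finite_quot_pow_maximalIdeal R j
    exact inferInstanceAs (Finite (Fin m → Fin n → R ⧸ 𝔪 ^ j))
  have hA : ∀ j : ℕ, ∃ A : Matrix (Fin m) (Fin n) (R ⧸ 𝔪 ^ j),
      {k | (T k).map (Ideal.Quotient.mk (𝔪 ^ j)) = A} ∈ U := by
    intro j
    have := hfin j
    obtain ⟨A, hA⟩ := (U.map fun k => (T k).map (Ideal.Quotient.mk (𝔪 ^ j))).eq_pure_of_finite
    refine ⟨A, ?_⟩
    have h1 : {A} ∈ U.map fun k => (T k).map (Ideal.Quotient.mk (𝔪 ^ j)) := by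
      rw [hA]; exact Ultrafilter.mem_pure.mpr rfl
    exact Ultrafilter.mem_map.mp h1
  choose A hA using hA
  -- Step 4: a diagonal sequence.
  have hW : ∀ j : ℕ, ∃ k : ℕ, j ≤ k ∧ ∀ i ≤ j, (T k).map (Ideal.Quotient.mk (𝔪 ^ i)) = A i := by
    intro j
    have hmem : (Set.Ici j ∩ ⋂ i ∈ Set.Iic j,
        {k | (T k).map (Ideal.Quotient.mk (𝔪 ^ i)) = A i}) ∈ U :=
      Filter.inter_mem (hU (Filter.Ici_mem_atTop j))
        ((Filter.biInter_mem (Set.finite_Iic j)).mpr fun i _ => hA i)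
    obtain ⟨k, hk⟩ := Ultrafilter.nonempty_of_mem hmem
    exact ⟨k, hk.1, fun i hi => Set.mem_iInter₂.mp hk.2 i hi⟩
  choose κ hκge hκA using hW
  -- Step 5: the limit matrix via adic completeness.
  have hsm : ∀ i : ℕ, (𝔪 ^ i • ⊤ : Submodule R R) = 𝔪 ^ i := by
    intro i; rw [← Ideal.one_eq_top, smul_eq_mul, mul_one]
  have hcauchy : ∀ (a : Fin m) (b : Fin n), ∀ {i j : ℕ}, i ≤ j →
      T (κ i) a b ≡ T (κ j) a b [SMOD (𝔪 ^ i • ⊤ : Submodule R R)] := by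
    intro a b i j hij
    rw [SModEq.sub_mem, hsm i, ← Ideal.Quotient.eq_zero_iff_mem, map_sub, sub_eq_zero]
    have h1 : (T (κ i)).map (Ideal.Quotient.mk (𝔪 ^ i)) = A i := hκA i i le_rfl
    have h2 : (T (κ j)).map (Ideal.Quotient.mk (𝔪 ^ i)) = A i := hκA j i hij
    have := h1.trans h2.symm
    exact congrFun (congrFun this a) b
  have hprec : ∀ (a : Fin m) (b : Fin n), ∃ L : R, ∀ j : ℕ,
      T (κ j) a b ≡ L [SMOD (𝔪 ^ j • ⊤ : Submodule R R)] := by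
    intro a b
    exact IsPrecomplete.prec (IsAdicComplete.toIsPrecomplete) (hcauchy a b)
  choose L hL using hprec
  set Tlim : Matrix (Fin m) (Fin n) R := Matrix.of L with hTlim
  have hD : ∀ (j : ℕ) (a : Fin m) (b : Fin n), Tlim a b - T (κ j) a b ∈ 𝔪 ^ j := by
    intro j a b
    have := (hL a b j).symm
    rw [SModEq.sub_mem, hsm j] at this
    exact this
  -- Step 6: `Tlimᵀ * G * Tlim = 0`.
  have hiso : Tlimᵀ * G * Tlim = 0 := by
    have key : ∀ (j : ℕ) (a : Fin n) (b : Fin n), (Tlimᵀ * G * Tlim) a b ∈ 𝔪 ^ j := by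
      intro j a b
      have hdecomp : Tlimᵀ * G * Tlim =
          (Tlim - T (κ j))ᵀ * (G * Tlim) + ((T (κ j))ᵀ * G) * (Tlim - T (κ j))
            + (T (κ j))ᵀ * G * T (κ j) := by
        rw [Matrix.transpose_sub, Matrix.sub_mul, Matrix.mul_sub, ← Matrix.mul_assoc,
          ← Matrix.mul_assoc]
        abel
      rw [hdecomp]
      rw [Matrix.add_apply, Matrix.add_apply]
      refine Ideal.add_mem _ (Ideal.add_mem _ ?_ ?_) ?_
      · refine mul_entries_mem_left _ _ (fun a c => ?_) a b
        rw [Matrix.transpose_apply, Matrix.sub_apply]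
        exact hD j c a
      · refine mul_entries_mem_right _ _ (fun c b => ?_) a b
        rw [Matrix.sub_apply]
        exact hD j c b
      · rw [hT (κ j)]
        rw [Matrix.smul_apply]
        rw [smul_eq_mul]
        exact Ideal.mul_mem_right _ _
          (Ideal.pow_le_pow_right (hκge j) (Ideal.pow_mem_pow hπ𝔪 (κ j)))
    ext a b
    rw [Matrix.zero_apply]
    refine IsHausdorff.haus (IsAdicComplete.toIsHausdorff (I := 𝔪) (M := R)) _ fun j => ?_
    rw [SModEq.zero, hsm j]
    exact key j a b
  -- Step 7: `Tlim` has a left inverse over `R`.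
  have hleft : ∃ Plim : Matrix (Fin n) (Fin m) R, Plim * Tlim = 1 := by
    set E : Matrix (Fin n) (Fin n) R := P (κ 1) * (Tlim - T (κ 1)) with hE
    have hPT : P (κ 1) * Tlim = 1 + E := by
      rw [hE, Matrix.mul_sub, hP (κ 1)]
      abel
    have hEmem : ∀ a b, E a b ∈ 𝔪 := by
      intro a b
      rw [hE]
      refine mul_entries_mem_right _ _ (fun c b => ?_) a b
      rw [Matrix.sub_apply]
      have := hD 1 c b
      rwa [pow_one] at this
    have hmap : (1 + E).map (Ideal.Quotient.mk 𝔪) = 1 := by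
      ext a b
      rw [Matrix.map_apply, Matrix.add_apply, map_add,
        Ideal.Quotient.eq_zero_iff_mem.mpr (hEmem a b), add_zero]
      by_cases h : a = b
      · subst h; simp
      · simp [Matrix.one_apply_ne h]
    have hdet1 : Ideal.Quotient.mk 𝔪 ((1 + E).det) = 1 := by
      have h' : ((1 + E).map (Ideal.Quotient.mk 𝔪)).det = 1 := by rw [hmap, Matrix.det_one]
      rw [RingHom.map_det]
      exact h'
    have hunit : IsUnit (1 + E).det := by
      rw [← IsLocalRing.notMem_maximalIdeal]
      intro hmem
      rw [Ideal.Quotient.eq_zero_iff_mem.mpr hmem] at hdet1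
      exact zero_ne_one hdet1
    refine ⟨(1 + E)⁻¹ * P (κ 1), ?_⟩
    rw [Matrix.mul_assoc, hPT, Matrix.nonsing_inv_mul _ hunit]
  obtain ⟨Plim, hPlim⟩ := hleft
  -- Step 8: push everything to the fraction field.
  set F := FractionRing R
  set φ : R →+* F := algebraMap R F with hφ
  have hφinj : Function.Injective φ := IsFractionRing.injective R F
  set TF : Matrix (Fin m) (Fin n) F := Tlim.map φ with hTF
  have hmapmul : ∀ {p q r : ℕ} (X : Matrix (Fin p) (Fin q) R) (Y : Matrix (Fin q) (Fin r) R),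
      (X * Y).map φ = X.map φ * Y.map φ := fun X Y => Matrix.map_mul
  have hPF : (Plim.map φ) * TF = 1 := by
    rw [hTF, ← hmapmul, hPlim, Matrix.map_one φ (map_zero φ) (map_one φ)]
  have hisoF : TFᵀ * G.map φ * TF = 0 := by
    rw [hTF, ← Matrix.transpose_map, ← hmapmul, ← hmapmul, hiso]
    ext a b
    simp [Matrix.map_apply]
  refine ⟨⟨TF, ⟨Plim.map φ, hPF⟩, hisoF⟩, ?_⟩
  -- Step 9: the rank inequality.
  have hdetF : IsUnit (G.map φ).det := by
    have h' : (G.map φ).det = φ G.det := (RingHom.map_det φ G).symm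
    rw [h']
    exact isUnit_iff_ne_zero.mpr fun h => hdet (hφinj (h.trans (map_zero φ).symm))
  have hzero : (TFᵀ * G.map φ) * TF = 0 := hisoF
  have hrank := Matrix.rank_add_rank_le_card_of_mul_eq_zero hzero
  rw [Fintype.card_fin] at hrank
  have h1 : (TFᵀ * G.map φ).rank = TF.rank := by
    rw [Matrix.rank_mul_eq_left_of_isUnit_det _ _ hdetF, Matrix.rank_transpose]
  have h2 : n ≤ TF.rank := by
    have := Matrix.rank_mul_le_right (Plim.map φ) TF
    rw [hPF, Matrix.rank_one, Fintype.card_fin] at this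
    exact this
  omega
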